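/- arXiv:1911.04364 — 2 statements merged into one kernel-verified Lean document; each statement's English description precedes it below -/
import Mathlib

section
/- Let N ≥ 1, g ∈ ℝ, l, m : Fin N → ℝ, and fix ω ∈ (Fin N → ℝ) and i ∈ Fin N. Define L : (Fin N → ℝ) → ℝ by L(θ) = (1/2)·Σ_{j} m j · (u_j(θ)² + v_j(θ)²) - g·Σ_{j} m j · y_j(θ), where u_j(θ) = Σ_{k ≤ j} l k · ω k · cos(θ k), v_j(θ) = Σ_{k ≤ j} l k · ω k · sin(θ k), and y_j(θ) = -Σ_{k ≤ j} l k · cos(θ k). Then the partial derivative of L with respect to the coordinate θ_i equals -g · l i · sin(θ i) · (Σ_{j : i ≤ j} m j) - l i · ω i · Σ_{j ∈ Fin N} l j · ω j · sin(θ i - θ j) · (Σ_{k : max(i,j) ≤ k} m k). -/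
open Finset

lemma npend_ici_sum {N : ℕ} (i : Fin N) (h : Fin N → ℝ) :
    ∑ j ∈ Ici i, h j = ∑ j : Fin N, if i ≤ j then h j else 0 := by
  rw [← Finset.sum_filter]
  congr 1
  ext j; simp

lemma npend_iic_sum {N : ℕ} (i : Fin N) (h : Fin N → ℝ) :
    ∑ j ∈ Iic i, h j = ∑ j : Fin N, if j ≤ i then h j else 0 := by
  rw [← Finset.sum_filter]
  congr 1
  ext j; simp

lemma npend_swap_lemma (N : ℕ) (i : Fin N) (f m : Fin N → ℝ) :
    ∑ j ∈ Ici i, m j * ∑ k ∈ Iic j, f k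
      = ∑ k : Fin N, f k * ∑ j ∈ Ici (max i k), m j := by
  have h1 : ∑ j ∈ Ici i, m j * ∑ k ∈ Iic j, f k
      = ∑ j : Fin N, ∑ k : Fin N, if i ≤ j ∧ k ≤ j then m j * f k else 0 := by
    rw [npend_ici_sum i (fun j => m j * ∑ k ∈ Iic j, f k)]
    refine Finset.sum_congr rfl fun j _ => ?_
    by_cases h : i ≤ j <;> simp [h, Finset.mul_sum, npend_iic_sum j (fun k => m j * f k)]
  rw [h1, Finset.sum_comm]
  refine Finset.sum_congr rfl fun k _ => ?_
  rw [npend_ici_sum (max i k) m, Finset.mul_sum]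
  refine Finset.sum_congr rfl fun j _ => ?_
  by_cases h : max i k ≤ j
  · simp [h, (max_le_iff.mp h).1, (max_le_iff.mp h).2, mul_comm]
  · rw [max_le_iff] at h
    push_neg at h
    by_cases h2 : i ≤ j
    · simp [h2, h h2, mul_comm]
    · simp [h2]

theorem npendulum_lagrangian_partial_theta
    (N : ℕ) (hN : 1 ≤ N) (g : ℝ) (l m : Fin N → ℝ)
    (ω : Fin N → ℝ) (i : Fin N) (θ : Fin N → ℝ)
    (L : (Fin N → ℝ) → ℝ)
    (hL : L = fun θ' =>
      (1/2) * ∑ j : Fin N, m j *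
          ((∑ k ∈ Finset.Iic j, l k * ω k * Real.cos (θ' k)) ^ 2
            + (∑ k ∈ Finset.Iic j, l k * ω k * Real.sin (θ' k)) ^ 2)
        - g * ∑ j : Fin N, m j * (-∑ k ∈ Finset.Iic j, l k * Real.cos (θ' k))) :
    deriv (fun s : ℝ => L (θ + s • (Pi.single i 1 : Fin N → ℝ))) 0
      = -(g * l i * Real.sin (θ i) * ∑ j ∈ Finset.Ici i, m j)
        - l i * ω i * ∑ j : Fin N, l j * ω j * Real.sin (θ i - θ j)
            * ∑ k ∈ Finset.Ici (max i j), m k := by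
  subst hL
  set e : Fin N → ℝ := Pi.single i 1 with he
  have happ : ∀ (s : ℝ) (k : Fin N), (θ + s • e) k = θ k + s * e k := by
    intro s k; simp [Pi.add_apply, Pi.smul_apply, smul_eq_mul]
  have hlin : ∀ k : Fin N, HasDerivAt (fun s : ℝ => θ k + s * e k) (e k) 0 := by
    intro k
    simpa using (hasDerivAt_mul_const (e k)).const_add (θ k)
  have hcos : ∀ k : Fin N, HasDerivAt (fun s : ℝ => Real.cos (θ k + s * e k))
      (-Real.sin (θ k) * e k) 0 := by
    intro k; simpa using (hlin k).cos
  have hsin : ∀ k : Fin N, HasDerivAt (fun s : ℝ => Real.sin (θ k + s * e k))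
      (Real.cos (θ k) * e k) 0 := by
    intro k; simpa using (hlin k).sin
  have hu : ∀ j : Fin N, HasDerivAt
      (fun s : ℝ => ∑ k ∈ Iic j, l k * ω k * Real.cos (θ k + s * e k))
      (∑ k ∈ Iic j, l k * ω k * (-Real.sin (θ k) * e k)) 0 := by
    intro j
    exact HasDerivAt.fun_sum fun k _ => (hcos k).const_mul (l k * ω k)
  have hv : ∀ j : Fin N, HasDerivAt
      (fun s : ℝ => ∑ k ∈ Iic j, l k * ω k * Real.sin (θ k + s * e k))
      (∑ k ∈ Iic j, l k * ω k * (Real.cos (θ k) * e k)) 0 := by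
    intro j
    exact HasDerivAt.fun_sum fun k _ => (hsin k).const_mul (l k * ω k)
  have hkin : HasDerivAt (fun s : ℝ => (1/2 : ℝ) * ∑ j : Fin N, m j *
        ((∑ k ∈ Iic j, l k * ω k * Real.cos (θ k + s * e k)) ^ 2
          + (∑ k ∈ Iic j, l k * ω k * Real.sin (θ k + s * e k)) ^ 2))
      ((1/2 : ℝ) * ∑ j : Fin N, m j *
        ((2 : ℕ) * (∑ k ∈ Iic j, l k * ω k * Real.cos (θ k + 0 * e k)) ^ 1
            * (∑ k ∈ Iic j, l k * ω k * (-Real.sin (θ k) * e k))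
          + (2 : ℕ) * (∑ k ∈ Iic j, l k * ω k * Real.sin (θ k + 0 * e k)) ^ 1
            * (∑ k ∈ Iic j, l k * ω k * (Real.cos (θ k) * e k)))) 0 := by
    refine HasDerivAt.const_mul _ (HasDerivAt.fun_sum fun j _ => ?_)
    exact ((((hu j).pow 2).add ((hv j).pow 2)).const_mul (m j))
  have hpot : HasDerivAt (fun s : ℝ => g * ∑ j : Fin N, m j *
        (-∑ k ∈ Iic j, l k * Real.cos (θ k + s * e k)))
      (g * ∑ j : Fin N, m j * (-∑ k ∈ Iic j, l k * (-Real.sin (θ k) * e k))) 0 := by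
    refine HasDerivAt.const_mul _ (HasDerivAt.fun_sum fun j _ => ?_)
    exact ((HasDerivAt.fun_sum fun k _ => (hcos k).const_mul (l k)).neg).const_mul (m j)
  have key := (hkin.fun_sub hpot).deriv
  have hfun : (fun s : ℝ => (1/2 : ℝ) * (∑ j : Fin N, m j *
          ((∑ k ∈ Iic j, l k * ω k * Real.cos ((θ + s • e) k)) ^ 2
            + (∑ k ∈ Iic j, l k * ω k * Real.sin ((θ + s • e) k)) ^ 2))
        - g * ∑ j : Fin N, m j * (-∑ k ∈ Iic j, l k * Real.cos ((θ + s • e) k)))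
      = (fun s : ℝ => ((1/2 : ℝ) * ∑ j : Fin N, m j *
          ((∑ k ∈ Iic j, l k * ω k * Real.cos (θ k + s * e k)) ^ 2
            + (∑ k ∈ Iic j, l k * ω k * Real.sin (θ k + s * e k)) ^ 2))
        - g * ∑ j : Fin N, m j * (-∑ k ∈ Iic j, l k * Real.cos (θ k + s * e k))) := by
    funext s
    simp only [happ]
  rw [hfun, key]
  rw [he]
  simp only [Pi.single_apply, mul_ite, mul_one, mul_zero, Finset.sum_ite_eq',
    Finset.mem_Iic, pow_one, zero_mul, add_zero, Nat.cast_ofNat, neg_zero, ite_self]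
  have expand : ∀ j : Fin N, ∑ k ∈ Iic j, l k * ω k * Real.sin (θ i - θ k)
      = Real.sin (θ i) * ∑ k ∈ Iic j, l k * ω k * Real.cos (θ k)
        - Real.cos (θ i) * ∑ k ∈ Iic j, l k * ω k * Real.sin (θ k) := by
    intro j
    rw [Finset.mul_sum, Finset.mul_sum, ← Finset.sum_sub_distrib]
    refine Finset.sum_congr rfl fun k _ => ?_
    rw [Real.sin_sub]; ring
  calc _ = ∑ j : Fin N, (if i ≤ j then
          (-(g * l i * Real.sin (θ i) * m j)
            - l i * ω i * (m j * ∑ k ∈ Iic j, l k * ω k * Real.sin (θ i - θ k))) else 0) := by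
        rw [Finset.mul_sum, Finset.mul_sum, ← Finset.sum_sub_distrib]
        refine Finset.sum_congr rfl fun j _ => ?_
        by_cases h : i ≤ j
        · simp only [h, if_true, expand j]
          ring
        · simp [h]
    _ = _ := by
        rw [← npend_swap_lemma N i (fun k => l k * ω k * Real.sin (θ i - θ k)) m,
          npend_ici_sum i m,
          npend_ici_sum i (fun j => m j * ∑ k ∈ Iic j, l k * ω k * Real.sin (θ i - θ k)),
          Finset.mul_sum, Finset.mul_sum, ← Finset.sum_neg_distrib, ← Finset.sum_sub_distrib]
        refine Finset.sum_congr rfl fun j _ => ?_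
        by_cases h : i ≤ j <;> simp [h]
end

section
/- Let N ≥ 1, g ∈ ℝ, l, m : Fin N → ℝ, and fix θ ∈ (Fin N → ℝ) and i ∈ Fin N. Define L : (Fin N → ℝ) → ℝ by L(ω) = (1/2)·Σ_{j} m j · (u_j(ω)² + v_j(ω)²) - g·Σ_{j} m j · y_j, where u_j(ω) = Σ_{k ≤ j} l k · ω k · cos(θ k), v_j(ω) = Σ_{k ≤ j} l k · ω k · sin(θ k), and y_j = -Σ_{k ≤ j} l k · cos(θ k). Then the partial derivative of L with respect to the coordinate ω_i equals l i · Σ_{j ∈ Fin N} l j · ω j · cos(θ i - θ j) · (Σ_{k : max(i,j) ≤ k} m k). -/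
theorem npendulum_lagrangian_partial_omega
    (N : ℕ) (hN : 1 ≤ N) (g : ℝ) (l m : Fin N → ℝ)
    (θ : Fin N → ℝ) (i : Fin N) (ω : Fin N → ℝ)
    (L : (Fin N → ℝ) → ℝ)
    (hL : L = fun ω' =>
      (1/2) * ∑ j : Fin N, m j *
          ((∑ k ∈ Finset.Iic j, l k * ω' k * Real.cos (θ k)) ^ 2
            + (∑ k ∈ Finset.Iic j, l k * ω' k * Real.sin (θ k)) ^ 2)
        - g * ∑ j : Fin N, m j * (-∑ k ∈ Finset.Iic j, l k * Real.cos (θ k))) :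
    deriv (fun s : ℝ => L (ω + s • (Pi.single i 1 : Fin N → ℝ))) 0
      = l i * ∑ j : Fin N, l j * ω j * Real.cos (θ i - θ j)
          * ∑ k ∈ Finset.Ici (max i j), m k := by
  set A : Fin N → ℝ := fun j => ∑ k ∈ Finset.Iic j, l k * ω k * Real.cos (θ k) with hA
  set B : Fin N → ℝ := fun j => ∑ k ∈ Finset.Iic j, l k * ω k * Real.sin (θ k) with hB
  set C : Fin N → ℝ := fun j => if i ≤ j then l i * Real.cos (θ i) else 0 with hC
  set D : Fin N → ℝ := fun j => if i ≤ j then l i * Real.sin (θ i) else 0 with hD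
  set K : ℝ := g * ∑ j : Fin N, m j * (-∑ k ∈ Finset.Iic j, l k * Real.cos (θ k)) with hK
  have hsum : ∀ (s : ℝ) (j : Fin N) (f : Fin N → ℝ),
      ∑ k ∈ Finset.Iic j, l k * (ω k + s * (Pi.single i 1 : Fin N → ℝ) k) * f k
        = (∑ k ∈ Finset.Iic j, l k * ω k * f k)
          + s * (if i ≤ j then l i * f i else 0) := by
    intro s j f
    have h1 : ∑ k ∈ Finset.Iic j, l k * (ω k + s * (Pi.single i 1 : Fin N → ℝ) k) * f k
        = (∑ k ∈ Finset.Iic j, l k * ω k * f k)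
          + s * ∑ k ∈ Finset.Iic j, (if k = i then l k * f k else 0) := by
      rw [Finset.mul_sum, ← Finset.sum_add_distrib]
      refine Finset.sum_congr rfl fun k _ => ?_
      rw [Pi.single_apply]
      split_ifs <;> ring
    rw [h1, Finset.sum_ite_eq' (Finset.Iic j) i (fun k => l k * f k)]
    simp [Finset.mem_Iic]
  have hfun : (fun s : ℝ => L (ω + s • (Pi.single i 1 : Fin N → ℝ)))
      = fun s => (1/2) * ∑ j : Fin N, m j * ((A j + s * C j) ^ 2 + (B j + s * D j) ^ 2) - K := by
    funext s
    rw [hL]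
    simp only [Pi.add_apply, Pi.smul_apply, smul_eq_mul]
    congr 1
    refine congrArg _ (Finset.sum_congr rfl fun j _ => ?_)
    rw [hsum s j (fun k => Real.cos (θ k)), hsum s j (fun k => Real.sin (θ k))]
  rw [hfun]
  have hder : HasDerivAt
      (fun s : ℝ => (1/2) * ∑ j : Fin N, m j * ((A j + s * C j) ^ 2 + (B j + s * D j) ^ 2) - K)
      ((1/2) * ∑ j : Fin N, m j * (2 * A j * C j + 2 * B j * D j)) 0 := by
    have h : ∀ j ∈ Finset.univ, HasDerivAt
        (fun s : ℝ => m j * ((A j + s * C j) ^ 2 + (B j + s * D j) ^ 2))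
        (m j * (2 * A j * C j + 2 * B j * D j)) 0 := by
      intro j _
      have h1 : HasDerivAt (fun s : ℝ => A j + s * C j) (C j) 0 := by
        simpa using ((hasDerivAt_id (0:ℝ)).mul_const (C j)).const_add (A j)
      have h2 : HasDerivAt (fun s : ℝ => B j + s * D j) (D j) 0 := by
        simpa using ((hasDerivAt_id (0:ℝ)).mul_const (D j)).const_add (B j)
      have := ((h1.pow 2).add (h2.pow 2)).const_mul (m j)
      convert this using 1
      · rfl
      · rfl
      · rfl
      · simp
    simpa using ((HasDerivAt.fun_sum h).const_mul (1/2 : ℝ)).sub_const K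
  rw [hder.deriv]
  have step1 : (1/2 : ℝ) * ∑ j : Fin N, m j * (2 * A j * C j + 2 * B j * D j)
      = ∑ j : Fin N, (if i ≤ j then (∑ k ∈ Finset.Iic j,
          l i * (m j * (l k * ω k * Real.cos (θ i - θ k)))) else 0) := by
    rw [Finset.mul_sum]
    refine Finset.sum_congr rfl fun j _ => ?_
    by_cases hij : i ≤ j
    · simp only [hA, hB, hC, hD, hij, if_true]
      have expand : ∀ k : Fin N, l i * (m j * (l k * ω k * Real.cos (θ i - θ k)))
          = (m j * l i * Real.cos (θ i)) * (l k * ω k * Real.cos (θ k))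
            + (m j * l i * Real.sin (θ i)) * (l k * ω k * Real.sin (θ k)) := fun k => by
        rw [Real.cos_sub]; ring
      rw [Finset.sum_congr rfl fun k _ => expand k, Finset.sum_add_distrib,
        ← Finset.mul_sum, ← Finset.mul_sum]
      ring
    · simp [hC, hD, hij]
  rw [step1]
  have hfil : Finset.univ.filter (fun j : Fin N => i ≤ j) = Finset.Ici i := by
    ext j; simp
  rw [← Finset.sum_filter, hfil]
  have hcomm := Finset.sum_comm'
    (s := Finset.Ici i) (t := fun j => Finset.Iic j)
    (t' := (Finset.univ : Finset (Fin N))) (s' := fun k => Finset.Ici (max i k))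
    (f := fun j k => l i * (m j * (l k * ω k * Real.cos (θ i - θ k))))
    (by intro j k; simp [Finset.mem_Ici, Finset.mem_Iic, max_le_iff])
  rw [hcomm, Finset.mul_sum]
  refine Finset.sum_congr rfl fun k _ => ?_
  rw [Finset.mul_sum, Finset.mul_sum]
  exact Finset.sum_congr rfl fun j _ => by ring
end
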